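/- Let H₁, H₂ : A' → ℝ be Lipschitz functions on an open simply connected set A' ⊆ ℝ², and set b₁ := ∇^⊥ H₁ = (-∂₂H₁, ∂₁H₁). If ∇H₁ and ∇H₂ are parallel a.e. on A', then div(H₂ b₁) = 0 in the sense of distributions on A', i.e. ∫_{A'} H₂ (b₁ · ∇φ) dx = 0 for every Lipschitz φ with compact support in A'. -/

import Mathlib

open MeasureTheory Set Metric Filter

/-- Difference quotient tends to directional derivative at points of differentiability. -/
lemma dq_tendsto {f : ℝ × ℝ → ℝ} {x : ℝ × ℝ} (v : ℝ × ℝ) (hf : DifferentiableAt ℝ f x)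
    {u : ℕ → ℝ} (hu : Tendsto u atTop (nhdsWithin 0 {(0:ℝ)}ᶜ)) :
    Tendsto (fun n => (f (x + u n • v) - f x) / u n) atTop (nhds (fderiv ℝ f x v)) := by
  have hc : HasDerivAt (fun t : ℝ => x + t • v) v 0 := by
    simpa using ((hasDerivAt_id (0:ℝ)).smul_const v).const_add x
  have hfd : HasFDerivAt f (fderiv ℝ f x) (x + (0:ℝ) • v) := by simpa using hf.hasFDerivAt
  have hF : HasDerivAt (fun t : ℝ => f (x + t • v)) (fderiv ℝ f x v) 0 :=
    hfd.comp_hasDerivAt 0 hc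
  have hs := (hasDerivAt_iff_tendsto_slope.mp hF).comp hu
  convert hs using 2 with n
  simp [Function.comp, slope_def_field, div_eq_inv_mul]

/-- Bound on difference quotients of a Lipschitz function. -/
lemma dq_bound {f : ℝ × ℝ → ℝ} {K : NNReal} (hf : LipschitzWith K f) (x v : ℝ × ℝ)
    {h : ℝ} (hh : h ≠ 0) : |(f (x + h • v) - f x) / h| ≤ K * ‖v‖ := by
  rw [abs_div]
  have h1 : |f (x + h • v) - f x| ≤ K * (|h| * ‖v‖) := by
    have := hf.dist_le_mul (x + h • v) x
    simpa [Real.dist_eq, dist_eq_norm, norm_smul] using this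
  rw [div_le_iff₀ (abs_pos.mpr hh)]
  calc |f (x + h • v) - f x| ≤ K * (|h| * ‖v‖) := h1
    _ = K * ‖v‖ * |h| := by ring

lemma intg_piece {F ψ : ℝ × ℝ → ℝ} {KF : NNReal} (hF : LipschitzWith KF F)
    (hψ : Continuous ψ) (hψs : HasCompactSupport ψ) (c d e : ℝ × ℝ) :
    Integrable (fun x => (F (x + c) - F (x + d)) * ψ (x + e)) volume := by
  have hcs : HasCompactSupport fun x => ψ (x + e) :=
    hψs.comp_homeomorph (Homeomorph.addRight e)
  have hcs2 : HasCompactSupport fun x => (F (x + c) - F (x + d)) * ψ (x + e) := by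
    apply hcs.mul_left
  exact (((hF.continuous.comp (continuous_id.add continuous_const)).sub
    (hF.continuous.comp (continuous_id.add continuous_const))).mul
    (hψ.comp (continuous_id.add continuous_const))).integrable_of_hasCompactSupport hcs2

/-- The exact discrete integration-by-parts symmetry identity. -/
lemma dq_identity {F ψ : ℝ × ℝ → ℝ} {KF : NNReal} (hF : LipschitzWith KF F)
    (hψ : Continuous ψ) (hψs : HasCompactSupport ψ) (a b : ℝ × ℝ) :
    ∫ x, (F (x + a) - F x) * (ψ (x + b) - ψ x) =
      ∫ x, (F (x + -b) - F x) * (ψ (x + -a) - ψ x) := by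
  have i0 : ∀ c d e : ℝ × ℝ, Integrable (fun x => (F (x + c) - F (x + d)) * ψ (x + e)) volume :=
    fun c d e => intg_piece hF hψ hψs c d e
  -- LHS = ∫ (F(x+a) - F x) ψ(x+b) - ∫ (F(x+a) - F x) ψ x
  have e1 : ∀ x : ℝ × ℝ, x + 0 = x := fun x => add_zero x
  have L : (∫ x, (F (x + a) - F x) * (ψ (x + b) - ψ x)) =
      (∫ x, (F (x + a) - F (x + 0)) * ψ (x + b)) - ∫ x, (F (x + a) - F (x + 0)) * ψ (x + 0) := by
    rw [← integral_sub (i0 a 0 b) (i0 a 0 0)]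
    congr 1; funext x; simp [e1]; ring
  have R : (∫ x, (F (x + -b) - F x) * (ψ (x + -a) - ψ x)) =
      (∫ x, (F (x + -b) - F (x + 0)) * ψ (x + -a)) - ∫ x, (F (x + -b) - F (x + 0)) * ψ (x + 0) := by
    rw [← integral_sub (i0 (-b) 0 (-a)) (i0 (-b) 0 0)]
    congr 1; funext x; simp [e1]; ring
  -- translate first term of L by -b : x ↦ x + -b
  have T1 : (∫ x, (F (x + a) - F (x + 0)) * ψ (x + b)) =
      ∫ x, (F (x + (a + -b)) - F (x + -b)) * ψ (x + 0) := by
    rw [← integral_add_right_eq_self (fun x => (F (x + a) - F (x + 0)) * ψ (x + b)) (-b)]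
    congr 1; funext x
    have h1 : x + -b + a = x + (a + -b) := by abel
    have h2 : x + -b + b = x + 0 := by abel
    have h3 : x + -b + 0 = x + -b := by abel
    simp only [h1, h2, h3]
  -- translate first term of R by a
  have T2 : (∫ x, (F (x + -b) - F (x + 0)) * ψ (x + -a)) =
      ∫ x, (F (x + (-b + a)) - F (x + a)) * ψ (x + 0) := by
    rw [← integral_add_right_eq_self (fun x => (F (x + -b) - F (x + 0)) * ψ (x + -a)) a]
    congr 1; funext x
    have h1 : x + a + -b = x + (-b + a) := by abel
    have h2 : x + a + -a = x + 0 := by abel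
    have h3 : x + a + 0 = x + a := by abel
    simp only [h1, h2, h3]
  rw [L, R, T1, T2]
  rw [← integral_sub (i0 (a + -b) (-b) 0) (i0 a 0 0), ← integral_sub (i0 (-b + a) a 0) (i0 (-b) 0 0)]
  congr 1; funext x
  have : x + (a + -b) = x + (-b + a) := by abel
  rw [this]; ring

lemma lemA {F ψ : ℝ × ℝ → ℝ} {KF Kψ : NNReal} (hF : LipschitzWith KF F)
    (hψ : LipschitzWith Kψ ψ) (hc : HasCompactSupport ψ) :
    ∫ x, fderiv ℝ F x (1,0) * fderiv ℝ ψ x (0,1)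
      = ∫ x, fderiv ℝ F x (0,1) * fderiv ℝ ψ x (1,0) := by
  set e1 : ℝ × ℝ := (1,0) with he1
  set e2 : ℝ × ℝ := (0,1) with he2
  have ne1 : ‖e1‖ = 1 := by simp [he1, Prod.norm_def]
  have ne2 : ‖e2‖ = 1 := by simp [he2, Prod.norm_def]
  set u : ℕ → ℝ := fun n => ((n : ℝ) + 1)⁻¹ with hudef
  have hupos : ∀ n, 0 < u n := fun n => by positivity
  have hu0 : ∀ n, u n ≠ 0 := fun n => (hupos n).ne'
  have hu1 : ∀ n, |u n| ≤ 1 := by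
    intro n
    rw [abs_of_pos (hupos n)]
    rw [hudef]
    rw [inv_le_one_iff₀]
    right; linarith [Nat.cast_nonneg (α := ℝ) n]
  have hu : Tendsto u atTop (nhdsWithin 0 {(0:ℝ)}ᶜ) := by
    rw [tendsto_nhdsWithin_iff]
    constructor
    · simpa [hudef, one_div] using tendsto_one_div_add_atTop_nhds_zero_nat (𝕜 := ℝ)
    · exact Filter.Eventually.of_forall fun n => by simp [hu0 n]
  have hun : Tendsto (fun n => -u n) atTop (nhdsWithin 0 {(0:ℝ)}ᶜ) := by
    rw [tendsto_nhdsWithin_iff]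
    constructor
    · simpa [hudef, one_div] using (tendsto_one_div_add_atTop_nhds_zero_nat (𝕜 := ℝ)).neg
    · exact Filter.Eventually.of_forall fun n => by simp [hu0 n]
  set K : Set (ℝ × ℝ) := cthickening 1 (tsupport ψ) with hK
  have hKcomp : IsCompact K := hc.cthickening
  set bound : (ℝ × ℝ) → ℝ := K.indicator (fun _ => (KF : ℝ) * Kψ) with hbd
  have hbound_int : Integrable bound volume := by
    rw [hbd, integrable_indicator_iff hKcomp.isClosed.measurableSet]
    exact integrableOn_const hKcomp.measure_lt_top.ne
  -- vanishing of ψ-difference quotients outside K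
  have hzero : ∀ (h : ℝ), |h| ≤ 1 → ∀ v : ℝ × ℝ, ‖v‖ ≤ 1 → ∀ x ∉ K,
      ψ (x + h • v) - ψ x = 0 := by
    intro h hh v hv x hx
    have hx1 : x ∉ tsupport ψ := fun hmem => hx (self_subset_cthickening _ hmem)
    have hx2 : x + h • v ∉ tsupport ψ := by
      intro hmem
      refine hx (mem_cthickening_of_dist_le x (x + h • v) 1 _ hmem ?_)
      rw [dist_self_add_right, norm_smul, Real.norm_eq_abs]
      calc |h| * ‖v‖ ≤ 1 * 1 := by
            exact mul_le_mul hh hv (norm_nonneg v) zero_le_one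
        _ = 1 := by norm_num
    rw [image_eq_zero_of_notMem_tsupport hx1, image_eq_zero_of_notMem_tsupport hx2, sub_zero]
  set P : ℕ → (ℝ × ℝ) → ℝ := fun n x =>
    ((F (x + u n • e1) - F x) / u n) * ((ψ (x + u n • e2) - ψ x) / u n) with hP
  set Q : ℕ → (ℝ × ℝ) → ℝ := fun n x =>
    ((F (x + (-u n) • e2) - F x) / (-u n)) * ((ψ (x + (-u n) • e1) - ψ x) / (-u n)) with hQ
  have hcont : ∀ (f : ℝ × ℝ → ℝ), Continuous f → ∀ (c : ℝ × ℝ) (r : ℝ),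
      Continuous fun x => (f (x + c) - f x) / r := by
    intro f hf c r
    exact ((hf.comp (continuous_id.add continuous_const)).sub hf).div_const r
  have hPm : ∀ n, AEStronglyMeasurable (P n) volume := by
    intro n
    exact ((hcont F hF.continuous _ _).mul (hcont ψ hψ.continuous _ _)).aestronglyMeasurable
  have hQm : ∀ n, AEStronglyMeasurable (Q n) volume := by
    intro n
    exact ((hcont F hF.continuous _ _).mul (hcont ψ hψ.continuous _ _)).aestronglyMeasurable
  have habs : ∀ (h : ℝ), h ≠ 0 → |h| ≤ 1 → ∀ (v w : ℝ × ℝ), ‖v‖ = 1 → ‖w‖ = 1 → ∀ x,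
      ‖((F (x + h • v) - F x) / h) * ((ψ (x + h • w) - ψ x) / h)‖ ≤ bound x := by
    intro h hh h1 v w hv hw x
    by_cases hx : x ∈ K
    · rw [hbd, indicator_of_mem hx]
      rw [Real.norm_eq_abs, abs_mul]
      have b1 := dq_bound hF x v hh
      have b2 := dq_bound hψ x w hh
      rw [hv] at b1; rw [hw] at b2
      calc |(F (x + h • v) - F x) / h| * |(ψ (x + h • w) - ψ x) / h|
          ≤ ((KF : ℝ) * 1) * ((Kψ : ℝ) * 1) :=
            mul_le_mul b1 b2 (abs_nonneg _) (by positivity)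
        _ = (KF : ℝ) * Kψ := by ring
    · rw [hbd, indicator_of_notMem hx]
      rw [hzero h h1 w (le_of_eq hw) x hx]
      simp
  have hPb : ∀ n, ∀ᵐ x ∂(volume : Measure (ℝ × ℝ)), ‖P n x‖ ≤ bound x := by
    intro n
    exact Filter.Eventually.of_forall fun x => habs (u n) (hu0 n) (hu1 n) e1 e2 ne1 ne2 x
  have hQb : ∀ n, ∀ᵐ x ∂(volume : Measure (ℝ × ℝ)), ‖Q n x‖ ≤ bound x := by
    intro n
    refine Filter.Eventually.of_forall fun x => ?_
    exact habs (-u n) (neg_ne_zero.2 (hu0 n)) (by simpa using hu1 n) e2 e1 ne2 ne1 x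
  have hPlim : ∀ᵐ x ∂(volume : Measure (ℝ × ℝ)),
      Tendsto (fun n => P n x) atTop (nhds (fderiv ℝ F x e1 * fderiv ℝ ψ x e2)) := by
    filter_upwards [hF.ae_differentiableAt, hψ.ae_differentiableAt] with x hdF hdψ
    exact (dq_tendsto e1 hdF hu).mul (dq_tendsto e2 hdψ hu)
  have hQlim : ∀ᵐ x ∂(volume : Measure (ℝ × ℝ)),
      Tendsto (fun n => Q n x) atTop (nhds (fderiv ℝ F x e2 * fderiv ℝ ψ x e1)) := by
    filter_upwards [hF.ae_differentiableAt, hψ.ae_differentiableAt] with x hdF hdψ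
    exact (dq_tendsto e2 hdF hun).mul (dq_tendsto e1 hdψ hun)
  have l1 := tendsto_integral_of_dominated_convergence bound hPm hbound_int hPb hPlim
  have l2 := tendsto_integral_of_dominated_convergence bound hQm hbound_int hQb hQlim
  have heq : ∀ n, (∫ x, P n x) = ∫ x, Q n x := by
    intro n
    have hid := dq_identity hF hψ.continuous hc (u n • e1) (u n • e2)
    have c1 : (∫ x, P n x) = (u n * u n)⁻¹ *
        ∫ x, (F (x + u n • e1) - F x) * (ψ (x + u n • e2) - ψ x) := by
      rw [← integral_const_mul]
      congr 1; funext x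
      rw [hP]; field_simp
    have c2 : (∫ x, Q n x) = (u n * u n)⁻¹ *
        ∫ x, (F (x + -(u n • e2)) - F x) * (ψ (x + -(u n • e1)) - ψ x) := by
      rw [← integral_const_mul]
      congr 1; funext x
      simp only [hQ, neg_smul]
      field_simp
    rw [c1, c2, hid]
  rw [funext heq] at l1
  exact tendsto_nhds_unique l1 l2

lemma intg_fderiv {F ψ : ℝ × ℝ → ℝ} {KF Kψ : NNReal} (hF : LipschitzWith KF F)
    (hψ : LipschitzWith Kψ ψ) (hc : HasCompactSupport ψ) (v w : ℝ × ℝ) :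
    Integrable (fun x => fderiv ℝ F x v * fderiv ℝ ψ x w) volume := by
  have hmeas : AEStronglyMeasurable (fun x => fderiv ℝ F x v * fderiv ℝ ψ x w)
      (volume : Measure (ℝ × ℝ)) :=
    ((measurable_fderiv_apply_const ℝ F v).mul (measurable_fderiv_apply_const ℝ ψ w)).aestronglyMeasurable
  have hint : Integrable ((tsupport ψ).indicator
      (fun _ => (KF : ℝ) * ‖v‖ * ((Kψ : ℝ) * ‖w‖))) volume := by
    rw [integrable_indicator_iff (isClosed_tsupport ψ).measurableSet]
    exact integrableOn_const hc.measure_lt_top.ne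
  refine hint.mono' hmeas (Filter.Eventually.of_forall fun x => ?_)
  by_cases hx : x ∈ tsupport ψ
  · rw [indicator_of_mem hx]
    rw [Real.norm_eq_abs, abs_mul]
    have b1 : |fderiv ℝ F x v| ≤ (KF : ℝ) * ‖v‖ := by
      calc |fderiv ℝ F x v| ≤ ‖fderiv ℝ F x‖ * ‖v‖ := (fderiv ℝ F x).le_opNorm v
        _ ≤ (KF : ℝ) * ‖v‖ :=
          mul_le_mul_of_nonneg_right (norm_fderiv_le_of_lipschitz ℝ hF) (norm_nonneg v)
    have b2 : |fderiv ℝ ψ x w| ≤ (Kψ : ℝ) * ‖w‖ := by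
      calc |fderiv ℝ ψ x w| ≤ ‖fderiv ℝ ψ x‖ * ‖w‖ := (fderiv ℝ ψ x).le_opNorm w
        _ ≤ (Kψ : ℝ) * ‖w‖ :=
          mul_le_mul_of_nonneg_right (norm_fderiv_le_of_lipschitz ℝ hψ) (norm_nonneg w)
    exact mul_le_mul b1 b2 (abs_nonneg _) (by positivity)
  · rw [indicator_of_notMem hx]
    have : fderiv ℝ ψ x = 0 := by
      by_contra h
      exact hx (support_fderiv_subset ℝ (Function.mem_support.2 h))
    simp [this]

/-- div-free statement for Lipschitz compactly supported ψ. -/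
lemma lemB {F ψ : ℝ × ℝ → ℝ} {KF Kψ : NNReal} (hF : LipschitzWith KF F)
    (hψ : LipschitzWith Kψ ψ) (hc : HasCompactSupport ψ) :
    ∫ x, (fderiv ℝ F x (1,0) * fderiv ℝ ψ x (0,1)
      - fderiv ℝ F x (0,1) * fderiv ℝ ψ x (1,0)) = 0 := by
  rw [integral_sub (intg_fderiv hF hψ hc _ _) (intg_fderiv hF hψ hc _ _),
    lemA hF hψ hc, sub_self]

/-- Matching lemma, key step. If `H₁, H₂` are Lipschitz on an open simply
connected `A' ⊆ ℝ²` and `∇H₁ ∥ ∇H₂` a.e. on `A'` (vanishing 2D cross product), then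
`div (H₂ ∇^⊥H₁) = 0` in `D'(A')`: for every compactly supported Lipschitz test function `φ`
with support in `A'`, `∫_{A'} H₂ (∇^⊥H₁ · ∇φ) = 0`. -/
theorem stmt5 (A' : Set (ℝ × ℝ)) (hA : IsOpen A') [SimplyConnectedSpace A']
    (H₁ H₂ : ℝ × ℝ → ℝ) (K₁ K₂ : NNReal)
    (h₁ : LipschitzOnWith K₁ H₁ A') (h₂ : LipschitzOnWith K₂ H₂ A')
    (hpar : ∀ᵐ x ∂(volume.restrict A'),
      fderiv ℝ H₁ x (1, 0) * fderiv ℝ H₂ x (0, 1)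
        - fderiv ℝ H₁ x (0, 1) * fderiv ℝ H₂ x (1, 0) = 0) :
    ∀ φ : ℝ × ℝ → ℝ, (∃ K : NNReal, LipschitzWith K φ) → HasCompactSupport φ →
      tsupport φ ⊆ A' →
      ∫ x in A',
        H₂ x * fderiv ℝ φ x (-(fderiv ℝ H₁ x (0, 1)), fderiv ℝ H₁ x (1, 0)) = 0 := by
  intro φ hφL hφc hφs
  obtain ⟨Kφ, hφ⟩ := hφL
  obtain ⟨F, hF, hFeq⟩ := h₁.extend_real
  obtain ⟨G, hG, hGeq⟩ := h₂.extend_real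
  have hFd : ∀ x ∈ A', fderiv ℝ H₁ x = fderiv ℝ F x := by
    intro x hx
    apply Filter.EventuallyEq.fderiv_eq
    filter_upwards [hA.mem_nhds hx] with y hy using hFeq hy
  have hGd : ∀ x ∈ A', fderiv ℝ H₂ x = fderiv ℝ G x := by
    intro x hx
    apply Filter.EventuallyEq.fderiv_eq
    filter_upwards [hA.mem_nhds hx] with y hy using hGeq hy
  -- truncation of G near the support of φ
  have hKc : IsCompact (cthickening 1 (tsupport φ)) := hφc.cthickening
  obtain ⟨M0, hM0⟩ := hKc.exists_bound_of_continuousOn hG.continuous.continuousOn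
  set M : ℝ := max M0 0 with hMdef
  have hMnn : 0 ≤ M := le_max_right _ _
  set Gb : ℝ × ℝ → ℝ := fun x => max (min (G x) M) (-M) with hGbdef
  set KGb : NNReal := max (max K₂ 0) 0 with hKGbdef
  have hGbL : LipschitzWith KGb Gb :=
    (hG.min (LipschitzWith.const M)).max (LipschitzWith.const (-M))
  have hGbbd : ∀ x, |Gb x| ≤ M := by
    intro x
    rw [abs_le]
    exact ⟨le_max_right _ _, max_le (min_le_right _ _) (neg_le_self hMnn)⟩
  have hGbeq : ∀ x ∈ thickening 1 (tsupport φ), Gb x = G x := by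
    intro x hx
    have hb : |G x| ≤ M :=
      le_trans (hM0 x (thickening_subset_cthickening _ _ hx)) (le_max_left _ _)
    show min (G x) M ⊔ -M = G x
    rw [min_eq_left (abs_le.mp hb).2, max_eq_left (abs_le.mp hb).1]
  -- global bound for φ
  obtain ⟨C0, hC0⟩ := (hφc : IsCompact (tsupport φ)).exists_bound_of_continuousOn
    hφ.continuous.continuousOn
  set Cφ : ℝ := max C0 0 with hCdef
  have hφbd : ∀ x, |φ x| ≤ Cφ := by
    intro x
    by_cases hx : x ∈ tsupport φ
    · exact le_trans (hC0 x hx) (le_max_left _ _)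
    · rw [image_eq_zero_of_notMem_tsupport hx]
      simp [hCdef]
  -- the product test function
  set ψ : ℝ × ℝ → ℝ := fun x => Gb x * φ x with hψdef
  have hψc : HasCompactSupport ψ := hφc.mul_left
  have hψL : LipschitzWith (Real.toNNReal (M * Kφ + Cφ * KGb)) ψ := by
    apply LipschitzWith.of_dist_le_mul
    intro x y
    have h1 : dist (ψ x) (ψ y) ≤ |Gb x| * |φ x - φ y| + |φ y| * |Gb x - Gb y| := by
      rw [Real.dist_eq]
      calc |ψ x - ψ y| = |Gb x * (φ x - φ y) + φ y * (Gb x - Gb y)| := by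
            rw [hψdef]; ring_nf
        _ ≤ |Gb x * (φ x - φ y)| + |φ y * (Gb x - Gb y)| := abs_add_le _ _
        _ = |Gb x| * |φ x - φ y| + |φ y| * |Gb x - Gb y| := by rw [abs_mul, abs_mul]
    have h2 := hφ.dist_le_mul x y
    have h3 := hGbL.dist_le_mul x y
    rw [Real.dist_eq] at h2 h3
    calc dist (ψ x) (ψ y) ≤ |Gb x| * |φ x - φ y| + |φ y| * |Gb x - Gb y| := h1
      _ ≤ M * ((Kφ : ℝ) * dist x y) + Cφ * ((KGb : ℝ) * dist x y) := by
          have g1 : |Gb x| * |φ x - φ y| ≤ M * ((Kφ : ℝ) * dist x y) :=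
            mul_le_mul (hGbbd x) h2 (abs_nonneg _) hMnn
          have g2 : |φ y| * |Gb x - Gb y| ≤ Cφ * ((KGb : ℝ) * dist x y) :=
            mul_le_mul (hφbd y) h3 (abs_nonneg _) (le_max_right _ _)
          linarith
      _ = (M * Kφ + Cφ * KGb) * dist x y := by ring
      _ ≤ max (M * Kφ + Cφ * KGb) 0 * dist x y :=
          mul_le_mul_of_nonneg_right (le_max_left _ _) dist_nonneg
      _ = (Real.toNNReal (M * Kφ + Cφ * KGb) : ℝ) * dist x y := by
          rw [Real.coe_toNNReal']
  -- reduce set integral to full-space integral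
  have hred : (∫ x in A',
      H₂ x * fderiv ℝ φ x (-(fderiv ℝ H₁ x (0, 1)), fderiv ℝ H₁ x (1, 0)))
      = ∫ x, H₂ x * fderiv ℝ φ x (-(fderiv ℝ H₁ x (0, 1)), fderiv ℝ H₁ x (1, 0)) := by
    apply setIntegral_eq_integral_of_forall_compl_eq_zero
    intro x hx
    have hxs : x ∉ tsupport φ := fun h => hx (hφs h)
    have h0 : fderiv ℝ φ x = 0 := by
      by_contra h
      exact hxs (support_fderiv_subset ℝ (Function.mem_support.2 h))
    simp [h0]
  rw [hred]
  -- a.e. identification with divergence form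
  have hae : ∀ᵐ x ∂(volume : Measure (ℝ × ℝ)),
      H₂ x * fderiv ℝ φ x (-(fderiv ℝ H₁ x (0, 1)), fderiv ℝ H₁ x (1, 0))
        = fderiv ℝ F x (1,0) * fderiv ℝ ψ x (0,1)
          - fderiv ℝ F x (0,1) * fderiv ℝ ψ x (1,0) := by
    have hpar' := (ae_restrict_iff' hA.measurableSet).mp hpar
    filter_upwards [hpar', hGbL.ae_differentiableAt, hφ.ae_differentiableAt]
      with x hx hdG hdφ
    by_cases hxs : x ∈ tsupport φ
    · have hxA : x ∈ A' := hφs hxs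
      have hxT : x ∈ thickening 1 (tsupport φ) := self_subset_thickening one_pos _ hxs
      have e1 : fderiv ℝ H₁ x = fderiv ℝ F x := hFd x hxA
      have e2 : fderiv ℝ Gb x = fderiv ℝ H₂ x := by
        have ha : fderiv ℝ Gb x = fderiv ℝ G x := by
          apply Filter.EventuallyEq.fderiv_eq
          filter_upwards [isOpen_thickening.mem_nhds hxT] with y hy using hGbeq y hy
        rw [ha, hGd x hxA]
      have e3 : H₂ x = Gb x := by rw [hGbeq x hxT]; exact hGeq hxA
      have hmul : fderiv ℝ ψ x = Gb x • fderiv ℝ φ x + φ x • fderiv ℝ Gb x := by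
        rw [hψdef]
        exact fderiv_mul hdG hdφ
      have hvec : ((-(fderiv ℝ H₁ x (0, 1)) : ℝ), (fderiv ℝ H₁ x (1, 0) : ℝ))
          = (-(fderiv ℝ H₁ x (0, 1))) • ((1:ℝ), (0:ℝ))
            + (fderiv ℝ H₁ x (1, 0)) • ((0:ℝ), (1:ℝ)) := by
        simp [Prod.ext_iff]
      rw [hvec, map_add, (fderiv ℝ φ x).map_smul, (fderiv ℝ φ x).map_smul, hmul]
      simp only [ContinuousLinearMap.add_apply, ContinuousLinearMap.coe_smul',
        Pi.smul_apply, smul_eq_mul]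
      rw [← e1, e2, e3]
      have hcross := hx hxA
      linear_combination (-(φ x)) * hcross
    · have h0 : fderiv ℝ φ x = 0 := by
        by_contra h
        exact hxs (support_fderiv_subset ℝ (Function.mem_support.2 h))
      have hψ0 : fderiv ℝ ψ x = 0 := by
        have hev : ψ =ᶠ[nhds x] (fun _ => (0:ℝ)) := by
          filter_upwards [(isClosed_tsupport φ).isOpen_compl.mem_nhds hxs] with y hy
          rw [hψdef]
          simp only []
          rw [image_eq_zero_of_notMem_tsupport hy, mul_zero]
        rw [hev.fderiv_eq]
        simp
      simp [h0, hψ0]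
  rw [integral_congr_ae hae]
  exact lemB hF hψL hψc
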